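/- (Bailey–Borwein–Plouffe formula) π = ∑_{k=0}^∞ (1/16^k) · ( 4/(8k+1) - 2/(8k+4) - 1/(8k+5) - 1/(8k+6) ). -/

import Mathlib

open intervalIntegral Real

theorem statement14 :
    HasSum (fun k : ℕ => (1 / (16 : ℝ) ^ k) *
      (4 / (8 * (k : ℝ) + 1) - 2 / (8 * (k : ℝ) + 4)
        - 1 / (8 * (k : ℝ) + 5) - 1 / (8 * (k : ℝ) + 6))) Real.pi := by
  set f : ℕ → C(ℝ, ℝ) := fun k =>
    ⟨fun y => (y^8/16)^k * (4 - 2*y^3 - y^4 - y^5), by fun_prop⟩ with hf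
  have hsum : Summable fun k : ℕ =>
      ‖(f k).restrict (⟨Set.uIcc (0:ℝ) 1, isCompact_uIcc⟩ : TopologicalSpace.Compacts ℝ)‖ := by
    refine Summable.of_nonneg_of_le (fun k => norm_nonneg _) (fun k => ?_)
      ((summable_geometric_of_lt_one (r := (1/16:ℝ)) (by norm_num) (by norm_num)).mul_right 8)
    refine (ContinuousMap.norm_le _ (by positivity)).2 ?_
    rintro ⟨y, hy⟩
    obtain ⟨h0, h1⟩ : y ∈ Set.Icc (0:ℝ) 1 := by
      rw [← Set.uIcc_of_le (by norm_num : (0:ℝ) ≤ 1)]; exact hy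
    simp only [ContinuousMap.restrict_apply, ContinuousMap.coe_mk, hf, Real.norm_eq_abs]
    have h8 : y^8/16 ≤ 1/16 := by nlinarith [pow_le_one₀ h0 h1 (n := 8)]
    have h8' : 0 ≤ y^8/16 := by positivity
    rw [abs_mul]
    gcongr
    · rw [abs_pow, abs_of_nonneg h8']
      exact pow_le_pow_left₀ h8' h8 k
    · rw [abs_le]
      constructor <;> nlinarith [pow_le_one₀ h0 h1 (n := 3), pow_le_one₀ h0 h1 (n := 4),
        pow_le_one₀ h0 h1 (n := 5), pow_nonneg h0 3, pow_nonneg h0 4, pow_nonneg h0 5]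
  have H := hasSum_intervalIntegral_of_summable_norm (a := (0:ℝ)) (b := 1) hsum
  have hp : ∀ n : ℕ, ∫ y in (0:ℝ)..1, y^n = 1/((n:ℝ)+1) := by
    intro n; simp [integral_pow]
  have hterm : ∀ k : ℕ, (∫ y in (0:ℝ)..1, (f k) y) = (1 / (16 : ℝ) ^ k) *
      (4 / (8 * (k : ℝ) + 1) - 2 / (8 * (k : ℝ) + 4)
        - 1 / (8 * (k : ℝ) + 5) - 1 / (8 * (k : ℝ) + 6)) := by
    intro k
    have e : Set.EqOn (fun y => (f k) y)
        (fun y : ℝ => (1/16^k : ℝ) * (4*y^(8*k)) - (1/16^k : ℝ) * (2*y^(8*k+3))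
          - (1/16^k : ℝ) * (y^(8*k+4)) - (1/16^k : ℝ) * (y^(8*k+5))) (Set.uIcc (0:ℝ) 1) := by
      intro y _
      simp only [ContinuousMap.coe_mk, hf]
      simp only [div_pow, one_div, inv_pow, ← pow_mul, ← pow_add]
      ring
    rw [intervalIntegral.integral_congr e,
      intervalIntegral.integral_sub (by apply Continuous.intervalIntegrable; fun_prop)
        (by apply Continuous.intervalIntegrable; fun_prop),
      intervalIntegral.integral_sub (by apply Continuous.intervalIntegrable; fun_prop)
        (by apply Continuous.intervalIntegrable; fun_prop),
      intervalIntegral.integral_sub (by apply Continuous.intervalIntegrable; fun_prop)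
        (by apply Continuous.intervalIntegrable; fun_prop),
      ]
    simp only [intervalIntegral.integral_const_mul, hp]
    push_cast
    ring
  have hJ : (∫ y in (0:ℝ)..1, ∑' k, (f k) y)
      = ∫ y in (0:ℝ)..1, 16*(4 - 2*y^3 - y^4 - y^5)/(16 - y^8) := by
    apply intervalIntegral.integral_congr
    intro y hy
    rw [Set.uIcc_of_le (by norm_num)] at hy
    obtain ⟨h0, h1⟩ := hy
    have h8 : y^8/16 < 1 := by nlinarith [pow_le_one₀ h0 h1 (n := 8)]
    have h8' : 0 ≤ y^8/16 := by positivity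
    have e5 : (16:ℝ) - y^8 > 0 := by nlinarith [pow_le_one₀ h0 h1 (n := 8)]
    simp only [ContinuousMap.coe_mk, hf]
    rw [tsum_mul_right, tsum_geometric_of_lt_one h8' h8]
    rw [inv_eq_one_div, div_mul_eq_mul_div, one_mul, div_eq_div_iff (by nlinarith) e5.ne']
    ring
  have hI : ∫ y in (0:ℝ)..1, 16*(4 - 2*y^3 - y^4 - y^5)/(16 - y^8) = Real.pi := by
    have key : ∀ y ∈ Set.uIcc (0:ℝ) 1, HasDerivAt
        (fun y : ℝ => 2*Real.log (2-y^2) - Real.log (4+y^4) - Real.log (y^2-2*y+2)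
          + 4*Real.arctan (y-1) + Real.log (y^2+2*y+2))
        (16*(4 - 2*y^3 - y^4 - y^5)/(16 - y^8)) y := by
      intro y hy
      rw [Set.uIcc_of_le (by norm_num)] at hy
      obtain ⟨h0, h1⟩ := hy
      have e1 : (2:ℝ) - y^2 > 0 := by nlinarith
      have e2 : (4:ℝ) + y^4 > 0 := by positivity
      have e3 : y^2 - 2*y + 2 > 0 := by nlinarith [sq_nonneg (y-1)]
      have e4 : y^2 + 2*y + 2 > 0 := by nlinarith [sq_nonneg (y+1)]
      have e5 : (16:ℝ) - y^8 > 0 := by nlinarith [pow_le_one₀ h0 h1 (n := 8)]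
      have d1 : HasDerivAt (fun y : ℝ => 2 - y^2) (-(2*y)) y := by
        simpa using ((hasDerivAt_pow 2 y).const_sub 2)
      have d2 : HasDerivAt (fun y : ℝ => 4 + y^4) (4*y^3) y := by
        simpa using ((hasDerivAt_pow 4 y).const_add 4)
      have d3 : HasDerivAt (fun y : ℝ => y^2 - 2*y + 2) (2*y - 2) y := by
        have := ((hasDerivAt_pow 2 y).sub ((hasDerivAt_id y).const_mul 2)).add_const 2
        simpa using this
      have d4 : HasDerivAt (fun y : ℝ => y^2 + 2*y + 2) (2*y + 2) y := by
        have := ((hasDerivAt_pow 2 y).add ((hasDerivAt_id y).const_mul 2)).add_const 2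
        simpa using this
      have d5 : HasDerivAt (fun y : ℝ => Real.arctan (y-1)) (1/(1+(y-1)^2)) y := by
        have := ((hasDerivAt_id y).sub_const 1).arctan
        simpa using this
      have D := (((((d1.log e1.ne').const_mul 2).sub (d2.log e2.ne')).sub (d3.log e3.ne')).add
          (d5.const_mul 4)).add (d4.log e4.ne')
      refine HasDerivAt.congr_deriv D ?_
      rw [show (1:ℝ) + (y-1)^2 = y^2 - 2*y + 2 by ring]
      have e3' : y * (y - 2) + 2 ≠ 0 := by nlinarith
      field_simp
      ring
    rw [intervalIntegral.integral_eq_sub_of_hasDerivAt key]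
    · rw [show (1:ℝ)^2 - 2*1+2 = 1 by norm_num]
      norm_num [Real.log_one, Real.arctan_neg, Real.arctan_one]
      rw [show (4:ℝ)=2^2 by norm_num, Real.log_pow]
      push_cast; ring
    · apply ContinuousOn.intervalIntegrable
      apply ContinuousOn.div (by fun_prop) (by fun_prop)
      intro y hy
      rw [Set.uIcc_of_le (by norm_num)] at hy
      nlinarith [pow_le_one₀ hy.1 hy.2 (n := 8)]
  rw [hJ, hI] at H
  exact H.congr_fun fun k => (hterm k).symm
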